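/- arXiv:2603.00017 — 2 statements merged into one kernel-verified Lean document; each statement's English description precedes it below -/
import Mathlib

section
/- In Euclidean space ℝ³, with φ = (1+√5)/2, let M = (1/2, (1+φ)/2, φ/2) and M' = (−1/2, (1+φ)/2, φ/2). Then the angle between the vectors M and M' (equivalently, the angle ∠ M O M' at the origin O) equals π/5, i.e. 36°. -/
open Real

noncomputable def phi : ℝ := (1 + Real.sqrt 5) / 2

lemma phi_sq : phi ^ 2 = phi + 1 := by
  have h5 : Real.sqrt 5 ^ 2 = 5 := Real.sq_sqrt (by norm_num)
  unfold phi; ring_nf; nlinarith [h5]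

lemma phi_pos : 0 < phi := by
  have : 0 ≤ Real.sqrt 5 := Real.sqrt_nonneg 5
  unfold phi; linarith

/-- For M = (1/2, (1+φ)/2, φ/2) and M' = (−1/2, (1+φ)/2, φ/2) in ℝ³, the angle
between the vectors M and M' (the angle ∠MOM' at the origin) equals π/5. -/
theorem stmt_11 :
    let M : EuclideanSpace ℝ (Fin 3) := !₂[1 / 2, (1 + phi) / 2, phi / 2]
    let M' : EuclideanSpace ℝ (Fin 3) := !₂[-(1 / 2), (1 + phi) / 2, phi / 2]
    InnerProductGeometry.angle M M' = π / 5 := by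
  intro M M'
  have hinner : (inner ℝ M M' : ℝ) = (2 * phi + 1) / 2 := by
    simp only [M, M', PiLp.inner_apply, Fin.sum_univ_three, RCLike.inner_apply, conj_trivial]
    simp [Matrix.cons_val_zero, Matrix.cons_val_one, Matrix.head_cons]
    nlinarith [phi_sq]
  have hnormM : ‖M‖ = phi := by
    have : ‖M‖ ^ 2 = phi ^ 2 := by
      rw [← real_inner_self_eq_norm_sq]
      simp only [M, PiLp.inner_apply, Fin.sum_univ_three, RCLike.inner_apply, conj_trivial]
      simp [Matrix.cons_val_zero, Matrix.cons_val_one, Matrix.head_cons]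
      nlinarith [phi_sq]
    nlinarith [norm_nonneg M, phi_pos, this]
  have hnormM' : ‖M'‖ = phi := by
    have h2 : ‖M'‖ ^ 2 = phi ^ 2 := by
      rw [← real_inner_self_eq_norm_sq]
      simp only [M', PiLp.inner_apply, Fin.sum_univ_three, RCLike.inner_apply, conj_trivial]
      simp [Matrix.cons_val_zero, Matrix.cons_val_one, Matrix.head_cons]
      nlinarith [phi_sq]
    nlinarith [norm_nonneg M', phi_pos, h2]
  rw [InnerProductGeometry.angle, hinner, hnormM, hnormM']
  have hφ : phi * phi = phi + 1 := by nlinarith [phi_sq]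
  have hval : (2 * phi + 1) / 2 / (phi * phi) = (1 + Real.sqrt 5) / 4 := by
    rw [hφ]
    have : phi + 1 = (3 + Real.sqrt 5) / 2 := by unfold phi; ring
    rw [this]
    have h5 : Real.sqrt 5 ^ 2 = 5 := Real.sq_sqrt (by norm_num)
    have hpos : (0:ℝ) < 3 + Real.sqrt 5 := by nlinarith [Real.sqrt_nonneg 5]
    field_simp
    unfold phi
    nlinarith [h5]
  rw [hval, ← Real.cos_pi_div_five, Real.arccos_cos (by positivity)
    (by nlinarith [Real.pi_pos])]
end

section
/- With φ = (1+√5)/2, let V ⊂ ℝ³ be the twelve-point set {(0,±1,±φ), (±1,±φ,0), (±φ,0,±1)} (all sign combinations), and let N = (0,1,φ), S = (0,−1,−φ). Suppose u, l ∈ V satisfy dist(N,u) = 2, dist(S,l) = 2, and dist(u,l) = 2 (so {u,l} is a cross-edge joining an upper-ring vertex to an adjacent lower-ring vertex). Then the midpoint m = (u+l)/2 satisfies ⟪m, N − S⟫ = 0 and ‖m‖ = φ; that is, every cross-edge midpoint lies on the equatorial plane through the center perpendicular to the axis NS, on the circle of radius φ. -/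
open RealInnerProductSpace

/-- The twelve vertices (0,±1,±φ), (±1,±φ,0), (±φ,0,±1) of the standard regular
icosahedron of edge length 2. -/
noncomputable def icoV : Set (EuclideanSpace ℝ (Fin 3)) :=
  {!₂[0, 1, phi], !₂[0, 1, -phi], !₂[0, -1, phi], !₂[0, -1, -phi],
   !₂[1, phi, 0], !₂[1, -phi, 0], !₂[-1, phi, 0], !₂[-1, -phi, 0],
   !₂[phi, 0, 1], !₂[phi, 0, -1], !₂[-phi, 0, 1], !₂[-phi, 0, -1]}

lemma dist_sq3 (x y : EuclideanSpace ℝ (Fin 3)) :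
    dist x y ^ 2 = (x 0 - y 0) ^ 2 + (x 1 - y 1) ^ 2 + (x 2 - y 2) ^ 2 := by
  rw [EuclideanSpace.dist_eq, Real.sq_sqrt (by positivity), Fin.sum_univ_three]
  simp [Real.dist_eq, sq_abs]

lemma norm_eq_of_sq (x : EuclideanSpace ℝ (Fin 3)) (r : ℝ) (hr : 0 ≤ r)
    (h : x 0 ^ 2 + x 1 ^ 2 + x 2 ^ 2 = r ^ 2) : ‖x‖ = r := by
  rw [EuclideanSpace.norm_eq, Fin.sum_univ_three]
  simp only [Real.norm_eq_abs, sq_abs]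
  rw [h, Real.sqrt_sq hr]

set_option maxHeartbeats 4000000 in
/-- Every cross-edge midpoint lies on the equatorial plane perpendicular to the
axis NS through the center, on the circle of radius φ: if u, l are icosahedron
vertices with dist(N,u) = 2, dist(S,l) = 2, dist(u,l) = 2, then the midpoint
m = (u+l)/2 satisfies ⟪m, N − S⟫ = 0 and ‖m‖ = φ. -/
theorem stmt_12 :
    let N : EuclideanSpace ℝ (Fin 3) := !₂[0, 1, phi]
    let S : EuclideanSpace ℝ (Fin 3) := !₂[0, -1, -phi]
    ∀ u ∈ icoV, ∀ l ∈ icoV,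
      dist N u = 2 → dist S l = 2 → dist u l = 2 →
      ⟪midpoint ℝ u l, N - S⟫ = 0 ∧ ‖midpoint ℝ u l‖ = phi := by
  intro N S u hu l hl h1 h2 h3
  have hs : Real.sqrt 5 ^ 2 = 5 := Real.sq_sqrt (by norm_num)
  have hs2 : (2:ℝ) < Real.sqrt 5 := by nlinarith [Real.sqrt_nonneg 5]
  have hphi0 : (0:ℝ) ≤ phi := by unfold phi; positivity
  have e1 : dist N u ^ 2 = 4 := by rw [h1]; norm_num
  have e2 : dist S l ^ 2 = 4 := by rw [h2]; norm_num
  have e3 : dist u l ^ 2 = 4 := by rw [h3]; norm_num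
  rw [dist_sq3] at e1 e2 e3
  clear h1 h2 h3
  simp only [icoV, Set.mem_insert_iff, Set.mem_singleton_iff] at hu hl
  rcases hu with rfl | rfl | rfl | rfl | rfl | rfl | rfl | rfl | rfl | rfl | rfl | rfl <;>
  rcases hl with rfl | rfl | rfl | rfl | rfl | rfl | rfl | rfl | rfl | rfl | rfl | rfl <;>
    simp only [N, S, phi, PiLp.toLp_apply, Matrix.cons_val_zero, Matrix.cons_val_one, Matrix.head_cons,
      Matrix.cons_val_two, Matrix.tail_cons] at e1 e2 e3 <;>
  first
    | (exfalso; nlinarith [hs, hs2])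
    | (refine ⟨?_, norm_eq_of_sq _ _ hphi0 ?_⟩ <;>
        simp [N, S, PiLp.inner_apply, Fin.sum_univ_three, midpoint_eq_smul_add, phi] <;>
        first
          | ring1
          | (ring_nf; linarith [hs])
          | (ring_nf; nlinarith [hs, hs2])
          | nlinarith [hs, hs2])
end
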